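/- arXiv:2509.03513 — 3 statements merged into one kernel-verified Lean document; each statement's English description precedes it below -/
import Mathlib

section
/- For every U in SU(N) there exists an N×N complex matrix X that is Hermitian and traceless such that U = exp(iX) and ‖X‖²_{H-S} = Tr(X†X) ≤ N(N−1)π². In particular, the exponential map from Hermitian traceless matrices of Hilbert–Schmidt norm at most √(N(N−1))·π onto SU(N) is surjective. -/
open Matrix NormedSpace
open scoped ComplexOrder

open Module.End


local notation "⟪" x ", " y "⟫" => @inner ℂ _ _ x y

section InnerPreserving

variable {E : Type*} [NormedAddCommGroup E] [InnerProductSpace ℂ E]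
variable {T : E →ₗ[ℂ] E}

/-- hypothesis: T preserves inner products -/
def IsInnerPres (T : E →ₗ[ℂ] E) : Prop := ∀ x y : E, ⟪T x, T y⟫ = ⟪x, y⟫

theorem IsInnerPres.norm_eigenvalue (hT : IsInnerPres T) {μ : ℂ} {v : E}
    (hv : v ∈ eigenspace T μ) (hv0 : v ≠ 0) : ‖μ‖ = 1 := by
  rw [mem_eigenspace_iff] at hv
  have h := hT v v
  rw [hv, inner_smul_left, inner_smul_right] at h
  have hvv : (⟪v, v⟫ : ℂ) ≠ 0 := inner_self_ne_zero.mpr hv0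
  have hμ : (starRingEnd ℂ) μ * μ = 1 := by
    rw [← mul_assoc] at h
    have := mul_right_cancel₀ hvv (h.trans (one_mul (⟪v, v⟫ : ℂ)).symm)
    simpa using this
  have h2 : ‖μ‖ * ‖μ‖ = 1 := by
    have := congrArg (fun z : ℂ => ‖z‖) hμ
    simpa [_root_.map_mul, Complex.norm_conj] using this
  have h3 : ‖μ‖ = 1 := by nlinarith [norm_nonneg μ]
  simpa using h3

end InnerPreserving

section More

variable {E : Type*} [NormedAddCommGroup E] [InnerProductSpace ℂ E]
variable {T : E →ₗ[ℂ] E}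

theorem IsInnerPres.invariant_orthogonalComplement_eigenspace (hT : IsInnerPres T) (μ : ℂ)
    (v : E) (hv : v ∈ (eigenspace T μ)ᗮ) : T v ∈ (eigenspace T μ)ᗮ := by
  rcases eq_or_ne (eigenspace T μ) ⊥ with h | h
  · rw [h]; simp
  · obtain ⟨w₀, hw₀, hw₀0⟩ := Submodule.exists_mem_ne_zero_of_ne_bot h
    have hμ0 : μ ≠ 0 := by
      intro h0
      have := hT.norm_eigenvalue hw₀ hw₀0
      rw [h0] at this; simp at this
    intro w hw
    have hw' : T (μ⁻¹ • w) = w := by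
      rw [LinearMap.map_smul, mem_eigenspace_iff.mp hw, smul_smul, inv_mul_cancel₀ hμ0, one_smul]
    calc ⟪w, T v⟫ = ⟪T (μ⁻¹ • w), T v⟫ := by rw [hw']
    _ = ⟪μ⁻¹ • w, v⟫ := hT _ _
    _ = 0 := by rw [inner_smul_left, hv w hw, mul_zero]

theorem IsInnerPres.orthoComp_iSup_invariant (hT : IsInnerPres T)
    ⦃v : E⦄ (hv : v ∈ (⨆ μ, eigenspace T μ)ᗮ) : T v ∈ (⨆ μ, eigenspace T μ)ᗮ := by
  rw [← Submodule.iInf_orthogonal] at hv ⊢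
  exact T.iInf_invariant hT.invariant_orthogonalComplement_eigenspace v hv

theorem IsInnerPres.orthoComp_eq_bot [FiniteDimensional ℂ E] (hT : IsInnerPres T) :
    (⨆ μ, eigenspace T μ)ᗮ = ⊥ := by
  by_contra h
  haveI : Nontrivial ((⨆ μ, eigenspace T μ)ᗮ : Submodule ℂ E) :=
    Submodule.nontrivial_iff_ne_bot.mpr h
  obtain ⟨μ, hμ⟩ := Module.End.exists_eigenvalue (T.restrict hT.orthoComp_iSup_invariant)
  obtain ⟨v, hv⟩ := hμ.exists_hasEigenvector
  have hv1 : (v : E) ∈ eigenspace T μ :=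
    eigenspace_restrict_le_eigenspace T hT.orthoComp_iSup_invariant μ ⟨v, hv.1, rfl⟩
  have hv2 : (v : E) ∈ (⨆ μ, eigenspace T μ)ᗮ := v.2
  have : (v : E) = 0 := by
    have hd := Submodule.orthogonal_disjoint (⨆ μ, eigenspace T μ)
    exact (Submodule.disjoint_def.mp hd) _ (le_iSup (fun μ => eigenspace T μ) μ hv1) hv2
  exact hv.2 (Subtype.coe_injective (by simpa using this))

theorem IsInnerPres.orthogonalFamily_eigenspaces (hT : IsInnerPres T) :
    OrthogonalFamily ℂ (fun μ => eigenspace T μ) fun μ => (eigenspace T μ).subtypeₗᵢ := by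
  rintro μ ν hμν ⟨v, hv⟩ ⟨w, hw⟩
  by_cases hv' : v = 0
  · simp [hv']
  by_cases hw' : w = 0
  · simp [hw']
  simp only [Submodule.coe_subtypeₗᵢ, Submodule.coe_subtype]
  by_contra hvw
  have h1 := hT v w
  rw [mem_eigenspace_iff.mp hv, mem_eigenspace_iff.mp hw, inner_smul_left,
    inner_smul_right, ← mul_assoc] at h1
  have h2 : (starRingEnd ℂ) μ * ν = 1 := by
    have := mul_right_cancel₀ hvw (h1.trans (one_mul (⟪v, w⟫ : ℂ)).symm)
    simpa using this
  have hμ1 : ‖μ‖ = 1 := hT.norm_eigenvalue hv hv'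
  have h3 : (starRingEnd ℂ) μ * μ = 1 := by
    rw [mul_comm, Complex.mul_conj, ← Complex.sq_norm, hμ1]
    norm_num
  exact hμν.symm (mul_left_cancel₀ (fun h => by simp [h] at h3) (h3.trans h2.symm)).symm

theorem IsInnerPres.orthogonalFamily_eigenspaces' (hT : IsInnerPres T) :
    OrthogonalFamily ℂ (fun μ : Eigenvalues T => eigenspace T μ) fun μ =>
      (eigenspace T (μ : ℂ)).subtypeₗᵢ :=
  hT.orthogonalFamily_eigenspaces.comp Subtype.coe_injective

theorem IsInnerPres.orthoComp_eq_bot' [FiniteDimensional ℂ E] (hT : IsInnerPres T) :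
    (⨆ μ : Eigenvalues T, eigenspace T (μ : ℂ))ᗮ = ⊥ :=
  show (⨆ μ : { μ // eigenspace T μ ≠ ⊥ }, eigenspace T μ)ᗮ = ⊥ by
    rw [iSup_ne_bot_subtype, hT.orthoComp_eq_bot]

theorem IsInnerPres.direct_sum_isInternal [FiniteDimensional ℂ E] (hT : IsInnerPres T) :
    DirectSum.IsInternal fun μ : Eigenvalues T => eigenspace T (μ : ℂ) :=
  hT.orthogonalFamily_eigenspaces'.isInternal_iff.mpr hT.orthoComp_eq_bot'

end More

section Basis

variable {E : Type*} [NormedAddCommGroup E] [InnerProductSpace ℂ E] [FiniteDimensional ℂ E]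
variable {T : E →ₗ[ℂ] E} {n : ℕ}

noncomputable def IsInnerPres.eigenvectorBasis (hT : IsInnerPres T)
    (hn : Module.finrank ℂ E = n) : OrthonormalBasis (Fin n) ℂ E :=
  hT.direct_sum_isInternal.subordinateOrthonormalBasis hn hT.orthogonalFamily_eigenspaces'

noncomputable def IsInnerPres.eigenvalues (hT : IsInnerPres T)
    (hn : Module.finrank ℂ E = n) (i : Fin n) : ℂ :=
  (hT.direct_sum_isInternal.subordinateOrthonormalBasisIndex hn i
    hT.orthogonalFamily_eigenspaces').val

theorem IsInnerPres.apply_eigenvectorBasis (hT : IsInnerPres T)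
    (hn : Module.finrank ℂ E = n) (i : Fin n) :
    T (hT.eigenvectorBasis hn i) = hT.eigenvalues hn i • hT.eigenvectorBasis hn i := by
  have h := hT.direct_sum_isInternal.subordinateOrthonormalBasis_subordinate hn i
    hT.orthogonalFamily_eigenspaces'
  rw [IsInnerPres.eigenvectorBasis]
  exact mem_eigenspace_iff.mp h

theorem IsInnerPres.norm_eigenvalues (hT : IsInnerPres T)
    (hn : Module.finrank ℂ E = n) (i : Fin n) : ‖hT.eigenvalues hn i‖ = 1 := by
  have h0 : hT.eigenvectorBasis hn i ≠ 0 := (hT.eigenvectorBasis hn).toBasis.ne_zero i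
  exact hT.norm_eigenvalue (mem_eigenspace_iff.mpr (hT.apply_eigenvectorBasis hn i)) h0

end Basis

section MatrixDiag

variable {N : ℕ}

theorem unitary_exists_diag {U : Matrix (Fin N) (Fin N) ℂ}
    (hU : U ∈ Matrix.unitaryGroup (Fin N) ℂ) :
    ∃ V ∈ Matrix.unitaryGroup (Fin N) ℂ, ∃ d : Fin N → ℂ, (∀ i, ‖d i‖ = 1) ∧
      U = V * diagonal d * Vᴴ := by
  classical
  set E := EuclideanSpace ℂ (Fin N)
  set A : E →L[ℂ] E := Matrix.toEuclideanCLM (𝕜 := ℂ) U with hA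
  have hAu : star A * A = 1 := by
    rw [hA, ← map_star, ← _root_.map_mul, (Unitary.mem_iff.mp hU).1, _root_.map_one]
  set T : E →ₗ[ℂ] E := (A : E →L[ℂ] E).toLinearMap with hTdef
  have hT : IsInnerPres T := by
    intro x y
    have h1 : (⟪x, y⟫ : ℂ) = ⟪x, (star A * A) y⟫ := by rw [hAu]; simp
    rw [h1]
    rw [ContinuousLinearMap.mul_apply, ContinuousLinearMap.star_eq_adjoint,
      ContinuousLinearMap.adjoint_inner_right]
    rfl
  have hn : Module.finrank ℂ E = N := finrank_euclideanSpace_fin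
  set b := hT.eigenvectorBasis hn
  set d := hT.eigenvalues hn
  have hmulVec : ∀ j, U *ᵥ ⇑(b j) = d j • ⇑(b j) := by
    intro j
    have h := hT.apply_eigenvectorBasis hn j
    have h2 : T (b j) = Matrix.toEuclideanLin U (b j) := by
      rw [hTdef, hA]
      rw [Matrix.coe_toEuclideanCLM_eq_toEuclideanLin]
    rw [h2, Matrix.toEuclideanLin_apply] at h
    exact congrArg (WithLp.equiv 2 (Fin N → ℂ)) h
  set V : Matrix (Fin N) (Fin N) ℂ :=
    (EuclideanSpace.basisFun (Fin N) ℂ).toBasis.toMatrix b.toBasis with hV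
  have hVmem : V ∈ Matrix.unitaryGroup (Fin N) ℂ :=
    (EuclideanSpace.basisFun (Fin N) ℂ).toMatrix_orthonormalBasis_mem_unitary b
  refine ⟨V, hVmem, d, fun i => hT.norm_eigenvalues hn i, ?_⟩
  have hVapp : ∀ i j, V i j = ⇑(b j) i := fun i j => rfl
  have hVmulVec : ∀ j, V *ᵥ Pi.single j 1 = ⇑(b j) := by
    intro j
    simp only [Matrix.mulVec_single, mul_one]
    ext i
    simpa using hVapp i j
  have hstarV : ∀ j, Vᴴ *ᵥ ⇑(b j) = Pi.single j 1 := by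
    intro j
    rw [← hVmulVec, Matrix.mulVec_mulVec]
    have h2 : Vᴴ * V = 1 := Matrix.UnitaryGroup.star_mul_self ⟨V, hVmem⟩
    rw [h2, Matrix.one_mulVec]
  have key : Vᴴ * U * V = diagonal d := by
    apply Matrix.toEuclideanLin.injective
    apply Module.Basis.ext (EuclideanSpace.basisFun (Fin N) ℂ).toBasis
    intro i
    simp only [Matrix.toEuclideanLin_apply, OrthonormalBasis.coe_toBasis,
      EuclideanSpace.basisFun_apply, PiLp.ofLp_single, ← Matrix.mulVec_mulVec,
      hVmulVec, hmulVec, Matrix.diagonal_mulVec_single, Matrix.mulVec_smul, hstarV,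
      WithLp.toLp_smul, PiLp.toLp_single, mul_one]
    apply PiLp.ext
    intro j
    simp only [PiLp.smul_apply, EuclideanSpace.single_apply, smul_eq_mul, mul_ite, mul_one,
      mul_zero, Pi.single_apply]
  have h1 : V * Vᴴ = 1 := (Unitary.mem_iff.mp hVmem).2
  have hfin : V * (Vᴴ * U * V) * Vᴴ = U := by
    calc V * (Vᴴ * U * V) * Vᴴ = V * Vᴴ * U * (V * Vᴴ) := by
          simp only [Matrix.mul_assoc]
      _ = U := by rw [h1, Matrix.one_mul, Matrix.mul_one]
  rw [← key]
  exact hfin.symm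

end MatrixDiag


theorem sq_sum_bound {N : ℕ} (θ : Fin N → ℝ) (h0 : ∑ i, θ i = 0)
    (hpair : ∀ i j, |θ i - θ j| ≤ 2 * Real.pi) :
    ∑ i, (θ i)^2 ≤ N * (N - 1) * Real.pi ^ 2 := by
  rcases Nat.lt_or_ge N 2 with hN | hN
  · interval_cases N
    · simp
    · have h1 : θ 0 = 0 := by simpa using h0
      simp [Fin.sum_univ_one, h1]
  have hN1 : (1 : ℕ) ≤ N := by omega
  have expand : ∀ i : Fin N, ∑ j, (θ i - θ j)^2 = N * θ i^2 + ∑ j, θ j^2 := by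
    intro i
    have h : ∀ j ∈ Finset.univ, (θ i - θ j)^2 = θ i^2 - 2*θ i*θ j + θ j^2 :=
      fun j _ => by ring
    rw [Finset.sum_congr rfl h, Finset.sum_add_distrib, Finset.sum_sub_distrib,
      Finset.sum_const, Finset.card_univ, Fintype.card_fin, nsmul_eq_mul, ← Finset.mul_sum,
      h0, mul_zero, sub_zero]
  have e1 : ∑ i, ∑ j, (θ i - θ j)^2 = 2 * N * ∑ i, θ i ^ 2 := by
    rw [Finset.sum_congr rfl (fun i (_ : i ∈ Finset.univ) => expand i),
      Finset.sum_add_distrib, ← Finset.mul_sum, Finset.sum_const, Finset.card_univ,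
      Fintype.card_fin, nsmul_eq_mul]
    ring
  have e2 : ∀ i, ∑ j, (θ i - θ j)^2 ≤ (N - 1 : ℝ) * (2 * Real.pi)^2 := by
    intro i
    rw [← Finset.sum_erase (f := fun j => (θ i - θ j)^2) (a := i) Finset.univ (by ring)]
    calc ∑ j ∈ Finset.univ.erase i, (θ i - θ j)^2
        ≤ ∑ _j ∈ Finset.univ.erase i, (2 * Real.pi)^2 := by
          apply Finset.sum_le_sum
          intro j _
          have := hpair i j
          nlinarith [abs_nonneg (θ i - θ j), sq_abs (θ i - θ j)]
      _ = (N - 1 : ℝ) * (2 * Real.pi)^2 := by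
          rw [Finset.sum_const, Finset.card_erase_of_mem (Finset.mem_univ i),
            Finset.card_univ, Fintype.card_fin, nsmul_eq_mul]
          push_cast [Nat.cast_sub hN1]
          ring
  have e3 : 2 * N * ∑ i, θ i ^2 ≤ N * ((N - 1 : ℝ) * (2 * Real.pi)^2) := by
    rw [← e1]
    calc ∑ i, ∑ j, (θ i - θ j)^2 ≤ ∑ _i : Fin N, (N - 1 : ℝ) * (2 * Real.pi)^2 :=
          Finset.sum_le_sum (fun i _ => e2 i)
      _ = N * ((N - 1 : ℝ) * (2 * Real.pi)^2) := by
          rw [Finset.sum_const, Finset.card_univ, Fintype.card_fin, nsmul_eq_mul]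
  have hNpos : (0 : ℝ) < N := by positivity
  have h4 : ∑ i, θ i ^ 2 ≤ (N - 1 : ℝ) * 2 * Real.pi ^ 2 := by nlinarith
  have hN2 : (2 : ℝ) ≤ N := by exact_mod_cast hN
  nlinarith [h4, mul_nonneg (mul_nonneg (by linarith : (0:ℝ) ≤ (N:ℝ) - 1)
    (by linarith : (0:ℝ) ≤ (N:ℝ) - 2)) (sq_nonneg Real.pi)]

theorem shift_lemma_nonneg {N : ℕ} (φ : Fin N → ℝ) (hφ : ∀ i, |φ i| ≤ Real.pi)
    (k : ℕ) (hsum : ∑ i, φ i = 2 * Real.pi * k) :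
    ∃ θ : Fin N → ℝ, (∀ i, ∃ m : ℤ, θ i = φ i + 2 * Real.pi * m) ∧
      (∑ i, θ i = 0) ∧ ∀ i j, |θ i - θ j| ≤ 2 * Real.pi := by
  classical
  have hπ := Real.pi_pos
  have hkN : 2 * k ≤ N := by
    have h1 : ∑ i, φ i ≤ N * Real.pi := by
      calc ∑ i, φ i ≤ ∑ _i : Fin N, Real.pi :=
            Finset.sum_le_sum (fun i _ => (abs_le.mp (hφ i)).2)
        _ = N * Real.pi := by
            rw [Finset.sum_const, Finset.card_univ, Fintype.card_fin, nsmul_eq_mul]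
    rw [hsum] at h1
    have : (2 * k : ℝ) ≤ N := by nlinarith
    exact_mod_cast this
  have hkN' : k ≤ N := by omega
  set σ := Tuple.sort φ with hσ
  set ψ : Fin N → ℝ := φ ∘ σ with hψ
  have hmono : Monotone ψ := Tuple.monotone_sort φ
  set θ' : Fin N → ℝ := fun j => ψ j - if N - k ≤ (j : ℕ) then 2 * Real.pi else 0 with hθ'
  refine ⟨fun i => θ' (σ.symm i), ?_, ?_, ?_⟩
  · intro i
    by_cases h : N - k ≤ ((σ.symm i : Fin N) : ℕ)
    · refine ⟨-1, ?_⟩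
      simp only [hθ', hψ, Function.comp_apply, Equiv.apply_symm_apply, h, if_pos]
      push_cast; ring
    · refine ⟨0, ?_⟩
      simp only [hθ', hψ, Function.comp_apply, Equiv.apply_symm_apply, h, if_neg,
        not_false_iff]
      push_cast; ring
  · have hperm : ∑ i, θ' (σ.symm i) = ∑ j, θ' j := Equiv.sum_comp σ.symm θ'
    rw [hperm]
    have hsplit : ∑ j, θ' j = (∑ j, ψ j) - ∑ j : Fin N, (if N - k ≤ (j : ℕ) then 2 * Real.pi else 0) := by
      rw [← Finset.sum_sub_distrib]
    have hψsum : ∑ j, ψ j = ∑ i, φ i := Equiv.sum_comp σ φ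
    have hindsum : ∑ j : Fin N, (if N - k ≤ (j : ℕ) then 2 * Real.pi else 0)
        = 2 * Real.pi * k := by
      rw [Fin.sum_univ_eq_sum_range (fun j => if N - k ≤ j then 2 * Real.pi else 0) N]
      rw [Finset.range_eq_Ico, ← Finset.sum_Ico_consecutive _ (Nat.zero_le (N - k)) (Nat.sub_le N k)]
      have h1 : ∑ j ∈ Finset.Ico 0 (N - k), (if N - k ≤ j then 2 * Real.pi else 0) = 0 := by
        apply Finset.sum_eq_zero
        intro j hj
        rw [Finset.mem_Ico] at hj
        rw [if_neg (by omega)]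
      have h2 : ∑ j ∈ Finset.Ico (N - k) N, (if N - k ≤ j then 2 * Real.pi else 0)
          = 2 * Real.pi * k := by
        rw [Finset.sum_congr rfl (fun j hj => if_pos (Finset.mem_Ico.mp hj).1)]
        rw [Finset.sum_const, Nat.card_Ico, nsmul_eq_mul]
        rw [Nat.sub_sub_self hkN']
        ring
      rw [h1, h2, zero_add]
    rw [hsplit, hψsum, hindsum, hsum, sub_self]
  · have key : ∀ a b : Fin N, |θ' a - θ' b| ≤ 2 * Real.pi := by
      intro a b
      have hψa := hφ (σ a)
      have hψb := hφ (σ b)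
      have ha' : |ψ a| ≤ Real.pi := hψa
      have hb' : |ψ b| ≤ Real.pi := hψb
      rcases le_or_gt (N - k) (a : ℕ) with ha | ha <;>
        rcases le_or_gt (N - k) (b : ℕ) with hb | hb
      · simp only [hθ', if_pos ha, if_pos hb]
        rw [abs_le] at ha' hb' ⊢
        constructor <;> [linarith; linarith]
      · -- a shifted, b not: b < N - k ≤ a
        have hba : b ≤ a := by
          have : (b : ℕ) ≤ (a : ℕ) := by omega
          exact Fin.le_def.mpr this
        have hmono' : ψ b ≤ ψ a := hmono hba
        simp only [hθ', if_pos ha, if_neg (not_le.mpr hb)]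
        rw [abs_le] at ha' hb' ⊢
        constructor <;> [linarith; linarith]
      · have hab : a ≤ b := by
          have : (a : ℕ) ≤ (b : ℕ) := by omega
          exact Fin.le_def.mpr this
        have hmono' : ψ a ≤ ψ b := hmono hab
        simp only [hθ', if_neg (not_le.mpr ha), if_pos hb]
        rw [abs_le] at ha' hb' ⊢
        constructor <;> [linarith; linarith]
      · simp only [hθ', if_neg (not_le.mpr ha), if_neg (not_le.mpr hb)]
        rw [abs_le] at ha' hb' ⊢
        constructor <;> [linarith; linarith]
    intro i j
    exact key (σ.symm i) (σ.symm j)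

theorem shift_lemma {N : ℕ} (φ : Fin N → ℝ) (hφ : ∀ i, |φ i| ≤ Real.pi)
    (k : ℤ) (hsum : ∑ i, φ i = 2 * Real.pi * k) :
    ∃ θ : Fin N → ℝ, (∀ i, ∃ m : ℤ, θ i = φ i + 2 * Real.pi * m) ∧
      (∑ i, θ i = 0) ∧ ∀ i j, |θ i - θ j| ≤ 2 * Real.pi := by
  rcases le_or_gt 0 k with hk | hk
  · obtain ⟨K, rfl⟩ := Int.eq_ofNat_of_zero_le hk
    exact shift_lemma_nonneg φ hφ K (by exact_mod_cast hsum)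
  · obtain ⟨K, hK⟩ := Int.eq_ofNat_of_zero_le (by omega : (0:ℤ) ≤ -k)
    have hsum' : ∑ i, (-φ) i = 2 * Real.pi * K := by
      simp only [Pi.neg_apply]
      rw [Finset.sum_neg_distrib, hsum]
      have h5 : -(k:ℝ) = (K : ℝ) := by exact_mod_cast congrArg (Int.cast : ℤ → ℝ) hK
      rw [← h5]
      ring
    obtain ⟨θ, h1, h2, h3⟩ := shift_lemma_nonneg (-φ) (fun i => by simpa using hφ i) K hsum'
    refine ⟨-θ, ?_, ?_, ?_⟩
    · intro i
      obtain ⟨m, hm⟩ := h1 i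
      refine ⟨-m, ?_⟩
      simp only [Pi.neg_apply] at hm ⊢
      push_cast
      linarith
    · simp only [Pi.neg_apply]
      rw [Finset.sum_neg_distrib, h2, neg_zero]
    · intro i j
      have := h3 i j
      simp only [Pi.neg_apply] at this ⊢
      rw [abs_le] at this ⊢
      constructor <;> linarith

/-- Every `U ∈ SU(N)` is of the form `exp (i X)` for a Hermitian traceless matrix `X` whose
squared Hilbert–Schmidt norm `Tr (X† X)` is at most `N (N - 1) π²`.  In particular the
exponential map, restricted to Hermitian traceless matrices of Hilbert–Schmidt norm at most
`√(N (N - 1)) π`, is onto `SU(N)`. -/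
theorem exp_map_onto_SU (N : ℕ) (U : Matrix (Fin N) (Fin N) ℂ)
    (hU : U ∈ Matrix.specialUnitaryGroup (Fin N) ℂ) :
    ∃ X : Matrix (Fin N) (Fin N) ℂ, X.IsHermitian ∧ X.trace = 0 ∧
      U = exp (Complex.I • X) ∧
      (Xᴴ * X).trace ≤ ((N * (N - 1) * Real.pi ^ 2 : ℝ) : ℂ) := by
  classical
  obtain ⟨hU1, hUdet⟩ := Matrix.mem_specialUnitaryGroup_iff.mp hU
  obtain ⟨V, hV, d, hd1, hUVd⟩ := unitary_exists_diag hU1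
  have h1 : V * Vᴴ = 1 := (Unitary.mem_iff.mp hV).2
  have h2 : Vᴴ * V = 1 := (Unitary.mem_iff.mp hV).1
  -- product of eigenvalues is 1
  have hprod : ∏ i, d i = 1 := by
    have hdet : U.det = V.det * (∏ i, d i) * Vᴴ.det := by
      rw [hUVd, Matrix.det_mul, Matrix.det_mul, Matrix.det_diagonal]
    have hVV : V.det * Vᴴ.det = 1 := by
      rw [← Matrix.det_mul, h1, Matrix.det_one]
    calc ∏ i, d i = (V.det * Vᴴ.det) * ∏ i, d i := by rw [hVV, one_mul]
      _ = U.det := by rw [hdet]; ring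
      _ = 1 := hUdet
  -- arguments
  set φ : Fin N → ℝ := fun i => (d i).arg with hφdef
  have hφ : ∀ i, |φ i| ≤ Real.pi := fun i => Complex.abs_arg_le_pi (d i)
  have hdexp : ∀ i, d i = Complex.exp (φ i * Complex.I) := by
    intro i
    have := Complex.norm_mul_exp_arg_mul_I (d i)
    have habs : ‖d i‖ = 1 := hd1 i
    rw [habs, Complex.ofReal_one, one_mul] at this
    exact this.symm
  -- sum of args is 2πk
  obtain ⟨k, hk⟩ : ∃ k : ℤ, ∑ i, φ i = 2 * Real.pi * k := by
    have hexp : Complex.exp ((∑ i, (φ i : ℂ)) * Complex.I) = 1 := by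
      rw [Finset.sum_mul, Complex.exp_sum]
      rw [← hprod]
      exact Finset.prod_congr rfl fun i _ => (hdexp i).symm
    rw [Complex.exp_eq_one_iff] at hexp
    obtain ⟨n, hn⟩ := hexp
    refine ⟨n, ?_⟩
    have hn' : (∑ i, (φ i : ℂ)) * Complex.I = ((n : ℂ) * (2 * Real.pi)) * Complex.I := by
      rw [hn]; ring
    have hreal := mul_right_cancel₀ Complex.I_ne_zero hn'
    have hfin : ((∑ i, φ i : ℝ) : ℂ) = ((2 * Real.pi * n : ℝ) : ℂ) := by
      push_cast
      rw [hreal]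
      ring
    exact_mod_cast hfin
  obtain ⟨θ, hθφ, hθ0, hθpair⟩ := shift_lemma φ hφ k hk
  -- the Hermitian matrix
  set D : Matrix (Fin N) (Fin N) ℂ := diagonal (fun i => (θ i : ℂ)) with hD
  have hherm : (V * D * Vᴴ)ᴴ = V * D * Vᴴ := by
    rw [Matrix.conjTranspose_mul, Matrix.conjTranspose_mul, Matrix.conjTranspose_conjTranspose,
      hD, Matrix.diagonal_conjTranspose]
    have hstar : star (fun i => (θ i : ℂ)) = fun i => (θ i : ℂ) := by
      funext i
      simp [Complex.conj_ofReal]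
    rw [hstar, Matrix.mul_assoc]
  refine ⟨V * D * Vᴴ, hherm, ?_, ?_, ?_⟩
  · -- traceless
    rw [Matrix.trace_mul_cycle, h2, Matrix.one_mul, hD, Matrix.trace_diagonal]
    exact_mod_cast hθ0
  · -- exponential
    have hsmul : Complex.I • (V * D * Vᴴ) = V * (Complex.I • D) * Vᴴ := by
      rw [_root_.mul_smul_comm, _root_.smul_mul_assoc]
    have hDsmul : Complex.I • D = diagonal (fun i => Complex.I * (θ i : ℂ)) := by
      rw [hD, ← Matrix.diagonal_smul]
      congr 1
    have hVinv : V⁻¹ = Vᴴ := Matrix.inv_eq_left_inv h2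
    have hVunit : IsUnit V := by
      haveI := invertibleOfRightInverse V Vᴴ h1
      exact isUnit_of_invertible V
    rw [hsmul, hDsmul, ← hVinv, Matrix.exp_conj V _ hVunit, Matrix.exp_diagonal, hVinv]
    rw [hUVd]
    have hdiag : d = exp fun i => Complex.I * ((θ i : ℝ) : ℂ) := by
      funext i
      rw [Pi.exp_def, ← Complex.exp_eq_exp_ℂ]
      obtain ⟨m, hm⟩ := hθφ i
      rw [hdexp i]
      have h6 : Complex.I * ((θ i : ℝ) : ℂ) =
          ((φ i : ℝ) : ℂ) * Complex.I + (m : ℂ) * (2 * (Real.pi : ℂ) * Complex.I) := by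
        rw [hm]; push_cast; ring
      beta_reduce
      rw [h6, Complex.exp_add, Complex.exp_int_mul_two_pi_mul_I, mul_one]
    rw [hdiag]
  · -- trace bound
    have hXX : (V * D * Vᴴ)ᴴ * (V * D * Vᴴ) = V * (D * D) * Vᴴ := by
      rw [hherm]
      simp only [Matrix.mul_assoc]
      rw [← Matrix.mul_assoc Vᴴ V (D * Vᴴ), h2, Matrix.one_mul]
    rw [hXX, Matrix.trace_mul_cycle, h2, Matrix.one_mul]
    have htr : (D * D).trace = ((∑ i, (θ i)^2 : ℝ) : ℂ) := by
      rw [hD, Matrix.diagonal_mul_diagonal, Matrix.trace_diagonal]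
      push_cast
      exact Finset.sum_congr rfl fun i _ => (sq ((θ i : ℂ))) ▸ rfl
    rw [htr]
    exact Complex.real_le_real.mpr (sq_sum_bound θ hθ0 hθpair)
end

section
/- Let X₁, X₂, X₃, X₄ be N×N complex matrices that are Hermitian and traceless, and set U_p = exp(iX₁)·exp(iX₂)·(exp(iX₄)·exp(iX₃))†. Then the single-plaquette Wilson action satisfies the quadratic upper bound ‖U_p − 1‖²_{H-S} = |2 Re Tr(U_p − 1)| ≤ 4N · ∑_{j=1}^{4} Tr(X_j† X_j). -/
open Matrix NormedSpace

namespace WilsonAux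

attribute [local instance] Matrix.frobeniusNormedAddCommGroup

variable {N : ℕ}

/-- squared Hilbert–Schmidt norm as a real trace -/
noncomputable def tsq (A : Matrix (Fin N) (Fin N) ℂ) : ℝ := ((Aᴴ * A).trace).re

lemma tsq_eq_sum (A : Matrix (Fin N) (Fin N) ℂ) :
    tsq A = ∑ i, ∑ j, Complex.normSq (A j i) := by
  simp only [tsq, Matrix.trace, Matrix.diag, Matrix.mul_apply, Matrix.conjTranspose_apply,
    Complex.re_sum]
  refine Finset.sum_congr rfl fun i _ => Finset.sum_congr rfl fun j _ => ?_
  simp [Complex.normSq_apply, Complex.mul_re, mul_comm]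

lemma tsq_nonneg (A : Matrix (Fin N) (Fin N) ℂ) : 0 ≤ tsq A := by
  rw [tsq_eq_sum]
  exact Finset.sum_nonneg fun i _ => Finset.sum_nonneg fun j _ => Complex.normSq_nonneg _

lemma norm_sq_eq_tsq (A : Matrix (Fin N) (Fin N) ℂ) : ‖A‖ ^ 2 = tsq A := by
  rw [Matrix.frobenius_norm_def, tsq_eq_sum, ← Real.rpow_natCast _ 2,
    ← Real.rpow_mul (by positivity)]
  rw [Finset.sum_comm]
  norm_num
  refine Finset.sum_congr rfl fun i _ => Finset.sum_congr rfl fun j _ => ?_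
  exact Complex.sq_norm _

lemma norm_eq_of_tsq_eq {A B : Matrix (Fin N) (Fin N) ℂ} (h : tsq A = tsq B) : ‖A‖ = ‖B‖ := by
  calc ‖A‖ = Real.sqrt (‖A‖ ^ 2) := (Real.sqrt_sq (norm_nonneg _)).symm
    _ = Real.sqrt (‖B‖ ^ 2) := by rw [norm_sq_eq_tsq, norm_sq_eq_tsq, h]
    _ = ‖B‖ := Real.sqrt_sq (norm_nonneg _)

lemma tsq_mul_right (A V : Matrix (Fin N) (Fin N) ℂ) (hV : V * Vᴴ = 1) :
    tsq (A * V) = tsq A := by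
  unfold tsq
  rw [conjTranspose_mul]
  have : Vᴴ * Aᴴ * (A * V) = Vᴴ * (Aᴴ * A) * V := by noncomm_ring
  rw [this, Matrix.trace_mul_cycle, ← mul_assoc, hV, one_mul]

lemma tsq_mul_left (A V : Matrix (Fin N) (Fin N) ℂ) (hV : Vᴴ * V = 1) :
    tsq (V * A) = tsq A := by
  unfold tsq
  rw [conjTranspose_mul]
  have : Aᴴ * Vᴴ * (V * A) = Aᴴ * (Vᴴ * V) * A := by noncomm_ring
  rw [this, hV, mul_one]

lemma tsq_neg (A : Matrix (Fin N) (Fin N) ℂ) : tsq (-A) = tsq A := by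
  unfold tsq
  rw [conjTranspose_neg, neg_mul_neg]

lemma conjTranspose_exp (X : Matrix (Fin N) (Fin N) ℂ) (hX : X.IsHermitian) :
    (exp (Complex.I • X))ᴴ = exp (-(Complex.I • X)) := by
  rw [← Matrix.exp_conjTranspose]
  congr 1
  rw [conjTranspose_smul, hX.eq]
  simp [Complex.star_def, Complex.conj_I]

lemma exp_unitary_left (X : Matrix (Fin N) (Fin N) ℂ) (hX : X.IsHermitian) :
    (exp (Complex.I • X))ᴴ * exp (Complex.I • X) = 1 := by
  rw [conjTranspose_exp X hX, ← Matrix.exp_add_of_commute _ _ (Commute.neg_left (Commute.refl (Complex.I • X))),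
    neg_add_cancel, exp_zero]

lemma exp_unitary_right (X : Matrix (Fin N) (Fin N) ℂ) (hX : X.IsHermitian) :
    exp (Complex.I • X) * (exp (Complex.I • X))ᴴ = 1 := by
  rw [conjTranspose_exp X hX, ← Matrix.exp_add_of_commute _ _ (Commute.neg_right (Commute.refl (Complex.I • X))),
    add_neg_cancel, exp_zero]

lemma mul_unitary_right {P Q : Matrix (Fin N) (Fin N) ℂ} (hP : P * Pᴴ = 1) (hQ : Q * Qᴴ = 1) :
    (P * Q) * (P * Q)ᴴ = 1 := by
  rw [conjTranspose_mul]
  calc P * Q * (Qᴴ * Pᴴ) = P * (Q * Qᴴ) * Pᴴ := by noncomm_ring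
    _ = 1 := by rw [hQ, mul_one, hP]

lemma tsq_diagonal (v : Fin N → ℂ) : tsq (Matrix.diagonal v) = ∑ k, Complex.normSq (v k) := by
  rw [tsq_eq_sum]
  refine Finset.sum_congr rfl fun i _ => ?_
  rw [Finset.sum_eq_single i]
  · simp [Matrix.diagonal_apply_eq]
  · intro j _ hj
    rw [Matrix.diagonal_apply_ne _ hj]
    simp
  · simp

lemma entry_bound (t : ℝ) : Complex.normSq (Complex.exp (Complex.I * t) - 1) ≤ t ^ 2 := by
  rw [mul_comm, Complex.exp_mul_I, ← Complex.ofReal_cos, ← Complex.ofReal_sin]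
  have h1 : Real.sin t ^ 2 + Real.cos t ^ 2 = 1 := Real.sin_sq_add_cos_sq t
  have h2 : 1 - t ^ 2 / 2 ≤ Real.cos t := Real.one_sub_sq_div_two_le_cos
  simp only [Complex.normSq_apply, Complex.sub_re, Complex.sub_im, Complex.add_re,
    Complex.add_im, Complex.ofReal_re, Complex.ofReal_im, Complex.mul_re, Complex.mul_im,
    Complex.I_re, Complex.I_im, Complex.one_re, Complex.one_im]
  nlinarith

/-- The key spectral bound: `‖exp(iX) - 1‖² ≤ Tr(X†X)` for Hermitian `X`. -/
lemma key (X : Matrix (Fin N) (Fin N) ℂ) (hX : X.IsHermitian) :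
    tsq (exp (Complex.I • X) - 1) ≤ tsq X := by
  classical
  set V : Matrix (Fin N) (Fin N) ℂ := (hX.eigenvectorUnitary : Matrix (Fin N) (Fin N) ℂ) with hVdef
  have hV1 : Vᴴ * V = 1 := by
    rw [← Matrix.star_eq_conjTranspose]
    exact Unitary.star_mul_self_of_mem hX.eigenvectorUnitary.2
  have hV2 : V * Vᴴ = 1 := by
    rw [← Matrix.star_eq_conjTranspose]
    exact Unitary.mul_star_self_of_mem hX.eigenvectorUnitary.2
  have hVinv : V⁻¹ = Vᴴ := Matrix.inv_eq_left_inv hV1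
  have hVunit : IsUnit V := ⟨⟨V, Vᴴ, hV2, hV1⟩, rfl⟩
  set lam : Fin N → ℝ := hX.eigenvalues with hlam
  have hspec : X = V * Matrix.diagonal (fun i => (lam i : ℂ)) * Vᴴ := by
    have := hX.spectral_theorem
    rw [Unitary.conjStarAlgAut_apply] at this
    rw [← Matrix.star_eq_conjTranspose]
    exact this
  have hsmul : Complex.I • X = V * Matrix.diagonal (fun i => Complex.I * (lam i : ℂ)) * Vᴴ := by
    rw [hspec]
    have : Matrix.diagonal (fun i => Complex.I * (lam i : ℂ)) =
        Complex.I • Matrix.diagonal (fun i => (lam i : ℂ)) := by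
      rw [← Matrix.diagonal_smul]
      rfl
    rw [this]
    simp only [Matrix.smul_mul, Matrix.mul_smul]
  have hexp : exp (Complex.I • X) =
      V * Matrix.diagonal (fun i => Complex.exp (Complex.I * (lam i : ℂ))) * Vᴴ := by
    rw [hsmul, ← hVinv, Matrix.exp_conj V _ hVunit, Matrix.exp_diagonal,
      Complex.exp_eq_exp_ℂ, Pi.exp_def]
  have hdiff : exp (Complex.I • X) - 1 =
      V * (Matrix.diagonal (fun i => Complex.exp (Complex.I * (lam i : ℂ))) - 1) * Vᴴ := by
    rw [hexp, Matrix.mul_sub, Matrix.sub_mul, mul_one, hV2]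
  have hdiag : Matrix.diagonal (fun i => Complex.exp (Complex.I * (lam i : ℂ))) - 1 =
      Matrix.diagonal (fun i => Complex.exp (Complex.I * (lam i : ℂ)) - 1) := by
    rw [← Matrix.diagonal_one, Matrix.diagonal_sub]
  have e1 : tsq (exp (Complex.I • X) - 1) =
      ∑ k, Complex.normSq (Complex.exp (Complex.I * (lam k : ℂ)) - 1) := by
    rw [hdiff, tsq_mul_right _ _ (by rw [conjTranspose_conjTranspose]; exact hV1),
      tsq_mul_left _ _ hV1, hdiag, tsq_diagonal]
  have e2 : tsq X = ∑ k, (lam k) ^ 2 := by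
    rw [hspec, tsq_mul_right _ _ (by rw [conjTranspose_conjTranspose]; exact hV1),
      tsq_mul_left _ _ hV1, tsq_diagonal]
    refine Finset.sum_congr rfl fun k _ => ?_
    simp [Complex.normSq_ofReal, sq]
  rw [e1, e2]
  exact Finset.sum_le_sum fun k _ => entry_bound (lam k)

end WilsonAux

open WilsonAux

/-- Quadratic upper bound on the single-plaquette Wilson action: for Hermitian traceless
`X₁, X₂, X₃, X₄` and `U_p = exp(iX₁) exp(iX₂) (exp(iX₄) exp(iX₃))†`, one has
`‖U_p - 1‖²_{H-S} = |2 Re Tr (U_p - 1)| ≤ 4N ∑_{j=1}^4 Tr (X_j† X_j)`. -/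
theorem wilson_action_quadratic_upper_bound (N : ℕ)
    (X₁ X₂ X₃ X₄ : Matrix (Fin N) (Fin N) ℂ)
    (h₁ : X₁.IsHermitian) (h₂ : X₂.IsHermitian) (h₃ : X₃.IsHermitian) (h₄ : X₄.IsHermitian)
    (t₁ : X₁.trace = 0) (t₂ : X₂.trace = 0) (t₃ : X₃.trace = 0) (t₄ : X₄.trace = 0)
    (Up : Matrix (Fin N) (Fin N) ℂ)
    (hUp : Up = exp (Complex.I • X₁) * exp (Complex.I • X₂) *
      (exp (Complex.I • X₄) * exp (Complex.I • X₃))ᴴ) :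
    ((Up - 1)ᴴ * (Up - 1)).trace.re = |2 * ((Up - 1).trace.re)| ∧
    ((Up - 1)ᴴ * (Up - 1)).trace.re ≤
      4 * N * ((X₁ᴴ * X₁).trace.re + (X₂ᴴ * X₂).trace.re
        + (X₃ᴴ * X₃).trace.re + (X₄ᴴ * X₄).trace.re) := by
  classical
  letI : NormedAddCommGroup (Matrix (Fin N) (Fin N) ℂ) := Matrix.frobeniusNormedAddCommGroup
  -- rewrite Up as a product of four exponentials of Hermitian matrices
  have h₃' : (-X₃).IsHermitian := h₃.neg
  have h₄' : (-X₄).IsHermitian := h₄.neg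
  set A := exp (Complex.I • X₁) with hA
  set B := exp (Complex.I • X₂) with hB
  set C := exp (Complex.I • (-X₃)) with hC
  set D := exp (Complex.I • (-X₄)) with hD
  have hUp2 : Up = A * B * (C * D) := by
    rw [hUp, conjTranspose_mul, conjTranspose_exp X₃ h₃, conjTranspose_exp X₄ h₄]
    rw [hA, hB, hC, hD]
    congr 2 <;> simp [smul_neg]
  -- unitarity facts
  have hAu : A * Aᴴ = 1 := exp_unitary_right X₁ h₁
  have hBu : B * Bᴴ = 1 := exp_unitary_right X₂ h₂
  have hCu : C * Cᴴ = 1 := exp_unitary_right (-X₃) h₃'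
  have hDu : D * Dᴴ = 1 := exp_unitary_right (-X₄) h₄'
  have hUpu : Upᴴ * Up = 1 := by
    have h1 : Up * Upᴴ = 1 := by
      rw [hUp2]
      exact mul_unitary_right (mul_unitary_right hAu hBu) (mul_unitary_right hCu hDu)
    exact mul_eq_one_comm.mp h1
  -- Part 1: the trace identity
  have key1 : tsq (Up - 1) = 2 * N - 2 * Up.trace.re := by
    unfold tsq
    have hexpand : (Up - 1)ᴴ * (Up - 1) = Upᴴ * Up - Upᴴ - Up + 1 := by
      rw [conjTranspose_sub, conjTranspose_one]
      noncomm_ring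
    rw [hexpand, hUpu]
    simp only [Matrix.trace_add, Matrix.trace_sub, Matrix.trace_one, trace_conjTranspose]
    have : Complex.re (star Up.trace) = Up.trace.re := by simp [Complex.star_def]
    simp only [Complex.add_re, Complex.sub_re, this, Complex.natCast_re, Fintype.card_fin]
    ring
  have htrsub : (Up - 1).trace.re = Up.trace.re - N := by
    rw [Matrix.trace_sub, Matrix.trace_one]
    simp
  have hnn : 0 ≤ tsq (Up - 1) := tsq_nonneg _
  have part1 : ((Up - 1)ᴴ * (Up - 1)).trace.re = |2 * ((Up - 1).trace.re)| := by
    have : ((Up - 1)ᴴ * (Up - 1)).trace.re = tsq (Up - 1) := rfl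
    rw [this, key1, htrsub, abs_of_nonpos (by nlinarith)]
    ring
  refine ⟨part1, ?_⟩
  -- Part 2: the quadratic bound
  have hbd : tsq (Up - 1) ≤ 4 * (tsq X₁ + tsq X₂ + tsq X₃ + tsq X₄) := by
    -- telescoping
    have htel : Up - 1 = (A - 1) * (B * (C * D)) + ((B - 1) * (C * D) + ((C - 1) * D + (D - 1))) := by
      rw [hUp2]; noncomm_ring
    have ha : ‖(A - 1) * (B * (C * D))‖ = ‖A - 1‖ :=
      norm_eq_of_tsq_eq (tsq_mul_right _ _
        (mul_unitary_right hBu (mul_unitary_right hCu hDu)))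
    have hb : ‖(B - 1) * (C * D)‖ = ‖B - 1‖ :=
      norm_eq_of_tsq_eq (tsq_mul_right _ _ (mul_unitary_right hCu hDu))
    have hc : ‖(C - 1) * D‖ = ‖C - 1‖ := norm_eq_of_tsq_eq (tsq_mul_right _ _ hDu)
    have htri : ‖Up - 1‖ ≤ ‖A - 1‖ + ‖B - 1‖ + ‖C - 1‖ + ‖D - 1‖ := by
      rw [htel]
      calc ‖(A - 1) * (B * (C * D)) + ((B - 1) * (C * D) + ((C - 1) * D + (D - 1)))‖
          ≤ ‖(A - 1) * (B * (C * D))‖ + (‖(B - 1) * (C * D)‖ + (‖(C - 1) * D‖ + ‖D - 1‖)) := by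
            refine (norm_add_le _ _).trans ?_
            gcongr
            refine (norm_add_le _ _).trans ?_
            gcongr
            exact norm_add_le _ _
        _ = ‖A - 1‖ + ‖B - 1‖ + ‖C - 1‖ + ‖D - 1‖ := by rw [ha, hb, hc]; ring
    have hA2 : ‖A - 1‖ ^ 2 ≤ tsq X₁ := by rw [norm_sq_eq_tsq]; exact key X₁ h₁
    have hB2 : ‖B - 1‖ ^ 2 ≤ tsq X₂ := by rw [norm_sq_eq_tsq]; exact key X₂ h₂
    have hC2 : ‖C - 1‖ ^ 2 ≤ tsq X₃ := by
      rw [norm_sq_eq_tsq]; exact (key (-X₃) h₃').trans_eq (tsq_neg X₃)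
    have hD2 : ‖D - 1‖ ^ 2 ≤ tsq X₄ := by
      rw [norm_sq_eq_tsq]; exact (key (-X₄) h₄').trans_eq (tsq_neg X₄)
    have h1 : tsq (Up - 1) = ‖Up - 1‖ ^ 2 := (norm_sq_eq_tsq _).symm
    rw [h1]
    nlinarith [norm_nonneg (Up - 1), norm_nonneg (A - 1), norm_nonneg (B - 1),
      norm_nonneg (C - 1), norm_nonneg (D - 1), htri, sq_nonneg (‖A-1‖ - ‖B-1‖),
      sq_nonneg (‖A-1‖ - ‖C-1‖), sq_nonneg (‖A-1‖ - ‖D-1‖), sq_nonneg (‖B-1‖ - ‖C-1‖),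
      sq_nonneg (‖B-1‖ - ‖D-1‖), sq_nonneg (‖C-1‖ - ‖D-1‖)]
  have hsum_nonneg : 0 ≤ tsq X₁ + tsq X₂ + tsq X₃ + tsq X₄ := by
    have := tsq_nonneg X₁; have := tsq_nonneg X₂; have := tsq_nonneg X₃; have := tsq_nonneg X₄
    linarith
  have hfinal : tsq (Up - 1) ≤ 4 * N * (tsq X₁ + tsq X₂ + tsq X₃ + tsq X₄) := by
    rcases Nat.eq_zero_or_pos N with hN | hN
    · subst hN
      have hz : ∀ Y : Matrix (Fin 0) (Fin 0) ℂ, tsq Y = 0 := by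
        intro Y; rw [tsq_eq_sum]; simp
      rw [hz]
      simp
    · have : (1 : ℝ) ≤ N := by exact_mod_cast hN
      nlinarith
  exact hfinal
end

section
/- Let G be a compact topological group with Haar probability measure μ, V and E finite sets, s, t : E → V, and let w : G^E → ℝ be a nonnegative bounded measurable weight (e.g. w = exp(−β A) for a Wilson action A) with ∫ w dμ^E > 0, which is gauge invariant: w(Φ_h g) = w(g) for every h : V → G, where (Φ_h g)(b) = h(s b)·g(b)·(h(t b))⁻¹. Let b₀ ∈ E be a bond with s b₀ ≠ t b₀ and let F : G → ℂ be bounded measurable. Then the gauge-theory expectation of F(g(b₀)) factorizes through the free single-bond Haar average: ( ∫_{G^E} F(g(b₀)) · w(g) dμ^E(g) ) / ( ∫_{G^E} w dμ^E ) = ∫_G F dμ. -/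
open MeasureTheory

open scoped ENNReal NNReal

/-- On a compact group, a Haar probability measure is right invariant. -/
lemma elitzur_aux_right_inv {G : Type*} [Group G] [TopologicalSpace G] [IsTopologicalGroup G]
    [CompactSpace G] [MeasurableSpace G] [BorelSpace G]
    (μ : Measure G) [μ.IsHaarMeasure] [IsProbabilityMeasure μ] : μ.IsMulRightInvariant := by
  constructor
  intro g
  haveI : IsProbabilityMeasure (μ.map (· * g)) :=
    Measure.isProbabilityMeasure_map (measurable_mul_const g).aemeasurable
  exact Measure.isHaarMeasure_eq_of_isProbabilityMeasure (μ.map (· * g)) μ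

/-- Coordinatewise two-sided translations preserve the product Haar measure. -/
lemma elitzur_aux_mp {G : Type*} [Group G] [TopologicalSpace G] [IsTopologicalGroup G]
    [CompactSpace G] [MeasurableSpace G] [BorelSpace G]
    (μ : Measure G) [μ.IsHaarMeasure] [IsProbabilityMeasure μ]
    {E : Type*} [Fintype E] (c d : E → G) :
    MeasurePreserving (fun g : E → G => fun b => c b * g b * (d b)⁻¹)
      (Measure.pi fun _ : E => μ) (Measure.pi fun _ : E => μ) := by
  haveI := elitzur_aux_right_inv μ
  have hm : Measurable fun g : E → G => fun b => c b * g b * (d b)⁻¹ :=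
    measurable_pi_lambda _ fun b =>
      (((measurable_pi_apply b : Measurable fun g : E → G => g b).const_mul (c b)).mul_const (d b)⁻¹)
  refine ⟨hm, ?_⟩
  refine (Measure.pi_eq fun S hS => ?_).symm
  rw [Measure.map_apply hm (MeasurableSet.univ_pi hS)]
  have hpre : (fun g : E → G => fun b => c b * g b * (d b)⁻¹) ⁻¹' Set.pi Set.univ S
      = Set.pi Set.univ fun b => (fun x => c b * x * (d b)⁻¹) ⁻¹' S b := by
    ext g; simp [Set.mem_pi]
  rw [hpre, Measure.pi_pi]
  refine Finset.prod_congr rfl fun b _ => ?_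
  have hmp : MeasurePreserving (fun x : G => c b * x * (d b)⁻¹) μ μ :=
    (measurePreserving_mul_right μ (d b)⁻¹).comp (measurePreserving_mul_left μ (c b))
  exact hmp.measure_preimage (hS b).nullMeasurableSet

/-- Elitzur's theorem for a single bond: for a gauge-invariant, nonnegative, bounded weight `w`
with positive partition function, and a bond `b₀` with distinct endpoints, the normalized
expectation of any bounded measurable function of the single bond variable `g(b₀)` equals its
free single-bond Haar average. -/
theorem elitzur_single_bond
    {G : Type*} [Group G] [TopologicalSpace G] [IsTopologicalGroup G] [CompactSpace G]
    [MeasurableSpace G] [BorelSpace G]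
    (μ : Measure G) [μ.IsHaarMeasure] [IsProbabilityMeasure μ]
    {V E : Type*} [Fintype V] [Fintype E] (s t : E → V)
    (w : (E → G) → ℝ) (hw_meas : Measurable w) (hw_nonneg : ∀ g, 0 ≤ w g)
    (hw_bdd : ∃ C, ∀ g, w g ≤ C)
    (hw_pos : 0 < ∫ g, w g ∂(Measure.pi fun _ : E => μ))
    (hw_gauge : ∀ (h : V → G) (g : E → G),
      w (fun b => h (s b) * g b * (h (t b))⁻¹) = w g)
    (b₀ : E) (hb₀ : s b₀ ≠ t b₀)
    (F : G → ℂ) (hF_meas : Measurable F) (hF_bdd : ∃ C, ∀ x, ‖F x‖ ≤ C) :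
    (∫ g, F (g b₀) * ((w g : ℝ) : ℂ) ∂(Measure.pi fun _ : E => μ)) /
        (∫ g, ((w g : ℝ) : ℂ) ∂(Measure.pi fun _ : E => μ))
      = ∫ x, F x ∂μ := by
  classical
  obtain ⟨Cw, hCw⟩ := hw_bdd
  set μE : Measure (E → G) := Measure.pi fun _ : E => μ with hμE
  haveI : IsProbabilityMeasure μE := by rw [hμE]; infer_instance
  set f : (E → G) → ℝ≥0∞ := fun g => ENNReal.ofReal (w g) with hf
  have hf_meas : Measurable f := hw_meas.ennreal_ofReal
  set ρ : Measure (E → G) := μE.withDensity f with hρ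
  set ν : Measure G := ρ.map (fun g => g b₀) with hν
  have hw_int : Integrable w μE :=
    ⟨hw_meas.aestronglyMeasurable, HasFiniteIntegral.of_bounded (C := Cw)
      (Filter.Eventually.of_forall fun g => by
        rw [Real.norm_of_nonneg (hw_nonneg g)]; exact hCw g)⟩
  set Z : ℝ := ∫ g, w g ∂μE with hZ
  have hνuniv : ν Set.univ = ENNReal.ofReal Z := by
    rw [hν, Measure.map_apply (measurable_pi_apply b₀) MeasurableSet.univ, Set.preimage_univ,
      hρ, withDensity_apply _ MeasurableSet.univ, setLIntegral_univ,
      ← ofReal_integral_eq_lintegral_ofReal hw_int (Filter.Eventually.of_forall hw_nonneg)]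
  -- the gauge transformation associated with x : G
  set hv : G → V → G := fun x v => if v = s b₀ then x else 1 with hhv
  set T : G → (E → G) → (E → G) :=
    fun x g => fun b => hv x (s b) * g b * (hv x (t b))⁻¹ with hT
  have hTmp : ∀ x : G, MeasurePreserving (T x) μE μE := fun x =>
    elitzur_aux_mp μ (fun b => hv x (s b)) (fun b => hv x (t b))
  have hTb₀ : ∀ x g, T x g b₀ = x * g b₀ := by
    intro x g
    simp [hT, hhv, Ne.symm hb₀]
  -- ρ is invariant under T x
  have hρT : ∀ x : G, ρ.map (T x) = ρ := by
    intro x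
    ext S hS
    rw [Measure.map_apply (hTmp x).measurable hS, hρ,
      withDensity_apply _ ((hTmp x).measurable hS), withDensity_apply _ hS,
      ← lintegral_indicator ((hTmp x).measurable hS) f, ← lintegral_indicator hS f]
    have hcongr : ∀ g, (T x ⁻¹' S).indicator f g = S.indicator f (T x g) := by
      intro g
      by_cases hg : T x g ∈ S
      · rw [Set.indicator_of_mem hg, Set.indicator_of_mem (by exact hg)]
        simp only [hf]
        rw [hw_gauge (hv x) g]
      · rw [Set.indicator_of_notMem hg, Set.indicator_of_notMem (by exact hg)]
    rw [lintegral_congr hcongr]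
    exact (hTmp x).lintegral_comp (hf_meas.indicator hS)
  -- hence ν is left invariant
  haveI hν_li : ν.IsMulLeftInvariant := by
    constructor
    intro x
    rw [hν, Measure.map_map (measurable_const_mul x) (measurable_pi_apply b₀)]
    have : ((x * ·) ∘ fun g : E → G => g b₀) = (fun g : E → G => g b₀) ∘ T x := by
      funext g
      simp [Function.comp, hTb₀ x g]
    rw [this, ← Measure.map_map (measurable_pi_apply b₀) (hTmp x).measurable, hρT x]
  -- ν is a Haar measure
  have hZ0 : ENNReal.ofReal Z ≠ 0 := (ENNReal.ofReal_pos.mpr hw_pos).ne'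
  haveI hν_haar : ν.IsHaarMeasure :=
    Measure.isHaarMeasure_of_isCompact_nonempty_interior ν Set.univ isCompact_univ
      (by simp) (by rw [hνuniv]; exact hZ0) (by rw [hνuniv]; exact ENNReal.ofReal_ne_top)
  -- the normalized ν equals μ
  set ν' : Measure G := (ENNReal.ofReal Z)⁻¹ • ν with hν'
  haveI : IsProbabilityMeasure ν' := by
    constructor
    rw [hν', Measure.smul_apply, hνuniv, smul_eq_mul,
      ENNReal.inv_mul_cancel hZ0 ENNReal.ofReal_ne_top]
  haveI : ν'.IsHaarMeasure := by
    rw [hν']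
    exact Measure.IsHaarMeasure.smul (μ := ν)
      (ENNReal.inv_ne_zero.mpr ENNReal.ofReal_ne_top) (ENNReal.inv_ne_top.mpr hZ0)
  have hν'μ : ν' = μ := Measure.isHaarMeasure_eq_of_isProbabilityMeasure ν' μ
  have hνμ : ν = (ENNReal.ofReal Z) • μ := by
    rw [← hν'μ, hν', smul_smul, ENNReal.mul_inv_cancel hZ0 ENNReal.ofReal_ne_top, one_smul]
  -- translate the numerator into an integral against ν
  have hnum : (∫ g, F (g b₀) * ((w g : ℝ) : ℂ) ∂μE) = ∫ x, F x ∂ν := by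
    rw [hν, integral_map (measurable_pi_apply b₀).aemeasurable hF_meas.aestronglyMeasurable,
      hρ]
    have hfnn : f = fun g => ((Real.toNNReal (w g) : ℝ≥0) : ℝ≥0∞) := by
      funext g; simp [hf, ENNReal.ofReal]
    rw [hfnn, integral_withDensity_eq_integral_smul hw_meas.real_toNNReal]
    refine integral_congr_ae (Filter.Eventually.of_forall fun g => ?_)
    show F (g b₀) * ((w g : ℝ) : ℂ) = (Real.toNNReal (w g)) • F (g b₀)
    rw [NNReal.smul_def, Real.coe_toNNReal _ (hw_nonneg g), Complex.real_smul]
    exact mul_comm _ _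
  have hden : (∫ g, ((w g : ℝ) : ℂ) ∂μE) = ((Z : ℝ) : ℂ) := by
    rw [hZ]
    exact integral_ofReal
  rw [hnum, hνμ, integral_smul_measure, hden, ENNReal.toReal_ofReal hw_pos.le,
    Complex.real_smul, mul_comm, mul_div_assoc,
    div_self (Complex.ofReal_ne_zero.mpr hw_pos.ne'), mul_one]
end
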